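/- For |z| < 1 and integers t \geq 1, 0 \leq \ell < t, the theta function \Theta_{\ell,t}(z) := \sum_{m \in \mathbb{Z}^t, \sum m_i = 0, \sum i\cdot m_{i+1} \equiv \ell \ (mod\ t)} z^{\|m\|^2/2 + (\sum_{i=0}^{t-1} i\, m_{i+1})/t} satisfies \Theta_{\ell,t}(z) = (z;z)_\infty^t \cdot \sum_{m \geq 0, m \equiv \ell \ (mod\ t)} p(m) z^{m/t}, where p is the partition function and (z;z)_\infty = \prod_{k\geq 1}(1-z^k). -/

import Mathlib

open scoped BigOperators

namespace ThetaAux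

abbrev Lam := Σ n : ℕ, Nat.Partition n

lemma Lam_ext (q q' : Lam) (h : q.2.parts = q'.2.parts) : q = q' := by
  obtain ⟨n, P⟩ := q; obtain ⟨n', P'⟩ := q'
  have hn : n = n' := by rw [← P.parts_sum, ← P'.parts_sum, h]
  subst hn
  simp only [Sigma.mk.inj_iff, heq_eq_eq, true_and]
  exact Nat.Partition.ext h

/-! ### list lemmas -/

lemma getD_append_zeros (l : List ℕ) (j i : ℕ) :
    (l ++ List.replicate j 0).getD i 0 = l.getD i 0 := by
  by_cases h : i < l.length
  · exact List.getD_append _ _ _ _ h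
  · push_neg at h
    rw [List.getD_eq_default _ _ h]
    by_cases h2 : i < l.length + j
    · rw [List.getD_eq_getElem _ _ (by simpa using h2)]
      rw [List.getElem_append_right (by omega)]
      simp
    · rw [List.getD_eq_default]
      simpa using by omega

lemma ofFn_getD_eq (d : List ℕ) (m : ℕ) (h : d.length ≤ m) :
    List.ofFn (fun i : Fin m => d.getD i 0) = d ++ List.replicate (m - d.length) 0 := by
  induction m generalizing d with
  | zero =>
    have : d = [] := List.eq_nil_of_length_eq_zero (by omega)
    subst this; simp
  | succ m ih =>
    cases d with
    | nil => simpa using List.ofFn_const (m+1) 0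
    | cons a d =>
      rw [List.ofFn_succ]
      simp only [Fin.val_zero, Fin.val_succ, List.getD_cons_zero, List.getD_cons_succ]
      rw [ih d (by simpa using h)]
      rw [List.cons_append]
      congr 3
      simp only [List.length_cons]
      omega

lemma sorted_desc_decomp (l : List ℕ) (h : l.Pairwise (· ≥ ·)) :
    l.filter (· ≠ 0) ++ List.replicate (l.length - (l.filter (· ≠ 0)).length) 0 = l := by
  induction l with
  | nil => simp
  | cons a l ih =>
    rw [List.pairwise_cons] at h
    by_cases ha : a = 0
    · subst ha
      have hall : ∀ b ∈ (0 : ℕ) :: l, b = 0 := by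
        intro b hb
        rcases List.mem_cons.mp hb with h1 | h1
        · exact h1
        · exact Nat.le_zero.mp (h.1 b h1)
      have hf : ((0:ℕ) :: l).filter (· ≠ 0) = [] := by
        rw [List.filter_eq_nil_iff]
        intro b hb
        simpa using hall b hb
      rw [hf]
      simp only [List.nil_append, List.length_nil, Nat.sub_zero]
      symm
      exact List.eq_replicate_of_mem (by intro b hb; exact hall b hb)
    · have hf : (a :: l).filter (· ≠ 0) = a :: l.filter (· ≠ 0) := by
        rw [List.filter_cons_of_pos (by simpa using ha)]
      rw [hf]
      simp only [List.length_cons, List.cons_append]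
      have hlen : l.length + 1 - ((l.filter (· ≠ 0)).length + 1)
            = l.length - (l.filter (· ≠ 0)).length := by omega
      rw [hlen, ih h.2]

lemma getD_anti {l : List ℕ} (h : l.Pairwise (· ≥ ·)) {i j : ℕ} (hij : i ≤ j) :
    l.getD j 0 ≤ l.getD i 0 := by
  by_cases hj : j < l.length
  · have hi : i < l.length := lt_of_le_of_lt hij hj
    rw [List.getD_eq_getElem _ _ hj, List.getD_eq_getElem _ _ hi]
    rcases eq_or_lt_of_le hij with rfl | hlt
    · exact le_refl _
    · exact h.rel_get_of_lt (a := ⟨i, hi⟩) (b := ⟨j, hj⟩) hlt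
  · push_neg at hj
    rw [List.getD_eq_default _ _ hj]
    exact Nat.zero_le _

lemma sorted_lt_add {u : List ℕ} (h : u.Pairwise (· < ·)) :
    ∀ (k a b : ℕ) (hab : a ≤ b) (hb : b < u.length), b - a = k → u[a]'(by omega) + (b - a) ≤ u[b] := by
  intro k
  induction k with
  | zero => intro a b hab hb h0
            have : a = b := by omega
            subst this; simp
  | succ k ih =>
    intro a b hab hb h0
    have hb1 : b - 1 < u.length := by omega
    have h1 := ih a (b-1) (by omega) hb1 (by omega)
    have h2 : u[b-1] < u[b] := h.rel_get_of_lt (a := ⟨b-1, hb1⟩) (b := ⟨b, hb⟩) (by simp; omega)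
    omega

lemma getD_reverse' (l : List ℕ) (i : ℕ) (h : i < l.length) :
    l.reverse.getD i 0 = l.getD (l.length - 1 - i) 0 := by
  rw [List.getD_eq_getElem _ _ (by simpa using h), List.getD_eq_getElem _ _ (by omega)]
  exact List.getElem_reverse _

/-! ### the beta-set bijection -/

def dlist (q : Lam) : List ℕ := Multiset.sort q.2.parts (· ≥ ·)

lemma dlist_sorted (q : Lam) : (dlist q).Pairwise (· ≥ ·) := Multiset.pairwise_sort _ _

lemma dlist_length (q : Lam) : (dlist q).length = q.2.parts.card := Multiset.length_sort _

lemma dlist_coe (q : Lam) : ((dlist q) : Multiset ℕ) = q.2.parts := Multiset.sort_eq _ _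

lemma dlist_pos (q : Lam) : ∀ x ∈ dlist q, x ≠ 0 := by
  intro x hx
  have : x ∈ q.2.parts := by rw [← dlist_coe q]; exact_mod_cast hx
  have := q.2.parts_pos this
  omega

def fwdG (m : ℕ) (q : Lam) : Fin m → ℕ := fun i => (dlist q).getD i 0 + (m - 1 - i)

def fwdF (m : ℕ) (q : Lam) : Finset ℕ := Finset.image (fwdG m q) Finset.univ

def bwdE (m : ℕ) (S : Finset ℕ) : Fin m → ℕ := fun i => (S.sort (· ≤ ·)).getD (m - 1 - i) 0

def bwdW (m : ℕ) (S : Finset ℕ) : Fin m → ℕ := fun i => bwdE m S i - (m - 1 - i)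

def bwdList (m : ℕ) (S : Finset ℕ) : List ℕ := (List.ofFn (bwdW m S)).filter (· ≠ 0)

def bwdF (m : ℕ) (S : Finset ℕ) : Lam :=
  ⟨((bwdList m S : Multiset ℕ)).sum,
   ⟨(bwdList m S : Multiset ℕ),
    by intro i hi
       have : i ∈ bwdList m S := by exact_mod_cast hi
       have := List.of_mem_filter this
       simp only [ne_eq, decide_eq_true_eq] at this
       omega,
    rfl⟩⟩

lemma bwdF_fst (m : ℕ) (S : Finset ℕ) : (bwdF m S).1 = ((bwdList m S : Multiset ℕ)).sum := rfl

lemma bwdF_parts (m : ℕ) (S : Finset ℕ) : (bwdF m S).2.parts = (bwdList m S : Multiset ℕ) := rfl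

lemma fwdG_strictAnti (m : ℕ) (q : Lam) : ∀ i j : Fin m, i < j → fwdG m q j < fwdG m q i := by
  intro i j hij
  have h1 : (dlist q).getD j 0 ≤ (dlist q).getD i 0 :=
    getD_anti (dlist_sorted q) (le_of_lt hij)
  have h2 : (j : ℕ) < m := j.isLt
  have h3 : (i : ℕ) < (j : ℕ) := hij
  unfold fwdG
  omega

lemma fwdG_inj (m : ℕ) (q : Lam) : Function.Injective (fwdG m q) := by
  intro i j hij
  rcases lt_trichotomy i j with h | h | h
  · exact absurd hij (ne_of_gt (fwdG_strictAnti m q i j h))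
  · exact h
  · exact absurd hij (ne_of_lt (fwdG_strictAnti m q j i h))

lemma FA1 (m : ℕ) (q : Lam) : (fwdF m q).card = m := by
  rw [fwdF, Finset.card_image_of_injective _ (fwdG_inj m q), Finset.card_univ, Fintype.card_fin]

lemma FA2 (m : ℕ) (q : Lam) (h : q.2.parts.card ≤ m) :
    (fwdF m q).sum id = q.1 + ∑ i ∈ Finset.range m, i := by
  rw [fwdF, Finset.sum_image (fun x _ y _ h => fwdG_inj m q h)]
  have : ∑ i : Fin m, fwdG m q i
      = (∑ i : Fin m, (dlist q).getD i 0) + ∑ i : Fin m, (m - 1 - (i:ℕ)) := by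
    unfold fwdG; rw [Finset.sum_add_distrib]
  simp only [id_eq]
  rw [this]
  congr 1
  · have h1 : (∑ i : Fin m, (dlist q).getD i 0) = (List.ofFn (fun i : Fin m => (dlist q).getD i 0)).sum := by
      rw [List.sum_ofFn]
    rw [h1, ofFn_getD_eq _ _ (by rw [dlist_length]; exact h)]
    rw [List.sum_append]
    simp only [List.sum_replicate, smul_zero, add_zero]
    have : (dlist q).sum = ((dlist q : Multiset ℕ)).sum := by simp
    rw [this, dlist_coe]
    exact q.2.parts_sum
  · rw [Fin.sum_univ_eq_sum_range (fun i => m - 1 - i)]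
    exact Finset.sum_range_reflect id m


lemma sort_fwdF (m : ℕ) (q : Lam) :
    (fwdF m q).sort (· ≤ ·) = (List.ofFn (fwdG m q)).reverse := by
  have hnodup2 : (List.ofFn (fwdG m q)).reverse.Nodup := by
    rw [List.nodup_reverse]; exact List.nodup_ofFn.mpr (fwdG_inj m q)
  have htf : ((List.ofFn (fwdG m q)).reverse).toFinset = fwdF m q := by
    rw [List.toFinset_reverse]
    ext x
    simp [List.mem_ofFn, fwdF]
  have perm := List.perm_of_nodup_nodup_toFinset_eq (Finset.sort_nodup (fwdF m q) (· ≤ ·)) hnodup2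
    (by rw [Finset.sort_toFinset, htf])
  refine List.Perm.eq_of_pairwise' (Finset.pairwise_sort _ _) ?_ perm
  rw [List.pairwise_reverse]
  rw [List.pairwise_ofFn]
  intro i j hij
  exact le_of_lt (fwdG_strictAnti m q i j hij)

lemma bwdE_fwdF (m : ℕ) (q : Lam) (i : Fin m) : bwdE m (fwdF m q) i = fwdG m q i := by
  unfold bwdE
  rw [sort_fwdF]
  have hi : (i : ℕ) < m := i.isLt
  have hlen : (List.ofFn (fwdG m q)).length = m := by simp
  rw [getD_reverse' _ _ (by omega)]
  rw [hlen]
  have : m - 1 - (m - 1 - (i:ℕ)) = (i:ℕ) := by omega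
  rw [this]
  rw [List.getD_eq_getElem _ _ (by omega), List.getElem_ofFn]

lemma FA3 (m : ℕ) (q : Lam) (h : q.2.parts.card ≤ m) : bwdF m (fwdF m q) = q := by
  have hk : (dlist q).length ≤ m := by rw [dlist_length]; exact h
  have hW : ∀ i : Fin m, bwdW m (fwdF m q) i = (dlist q).getD i 0 := by
    intro i
    unfold bwdW
    rw [bwdE_fwdF]
    unfold fwdG
    omega
  have hlist : bwdList m (fwdF m q) = dlist q := by
    unfold bwdList
    rw [show List.ofFn (bwdW m (fwdF m q)) = List.ofFn (fun i : Fin m => (dlist q).getD i 0)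
        from congrArg _ (funext hW)]
    rw [ofFn_getD_eq _ _ hk, List.filter_append]
    rw [List.filter_eq_self.mpr (by intro a ha; simpa using dlist_pos q a ha)]
    rw [show (List.replicate (m - (dlist q).length) 0).filter (· ≠ 0) = [] by simp]
    simp
  apply Lam_ext
  rw [bwdF_parts, hlist, dlist_coe]

lemma FA5 (m : ℕ) (S : Finset ℕ) : (bwdF m S).2.parts.card ≤ m := by
  rw [bwdF_parts]
  rw [Multiset.coe_card]
  calc (bwdList m S).length ≤ (List.ofFn (bwdW m S)).length := List.length_filter_le _ _
    _ = m := by simp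

lemma bwd_getD (m : ℕ) (S : Finset ℕ) (hS : S.card = m) :
    ∀ ρ ρ' : ℕ, ρ ≤ ρ' → ρ' < m → (S.sort (· ≤ ·)).getD ρ 0 + (ρ' - ρ) ≤ (S.sort (· ≤ ·)).getD ρ' 0 := by
  intro ρ ρ' hρ hρ'
  have hlen : (S.sort (· ≤ ·)).length = m := by rw [Finset.length_sort, hS]
  rw [List.getD_eq_getElem _ _ (by omega), List.getD_eq_getElem _ _ (by omega)]
  exact sorted_lt_add (Finset.sortedLT_sort S).pairwise (ρ' - ρ) ρ ρ' hρ (by omega) rfl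

lemma bwdE_ge (m : ℕ) (S : Finset ℕ) (hS : S.card = m) (i : Fin m) :
    m - 1 - (i : ℕ) ≤ bwdE m S i := by
  have h := bwd_getD m S hS 0 (m - 1 - (i:ℕ)) (Nat.zero_le _) (by have := i.isLt; omega)
  unfold bwdE
  omega

lemma bwdW_anti (m : ℕ) (S : Finset ℕ) (hS : S.card = m) (i j : Fin m) (hij : i ≤ j) :
    bwdW m S j ≤ bwdW m S i := by
  have hi := i.isLt
  have hj := j.isLt
  have hij' : (i:ℕ) ≤ (j:ℕ) := hij
  have h := bwd_getD m S hS (m - 1 - (j:ℕ)) (m - 1 - (i:ℕ)) (by omega) (by omega)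
  have h2 := bwdE_ge m S hS i
  have h3 := bwdE_ge m S hS j
  unfold bwdW
  unfold bwdE at *
  omega

lemma bwd_key (m : ℕ) (S : Finset ℕ) (hS : S.card = m) :
    List.ofFn (bwdW m S) = bwdList m S
      ++ List.replicate (m - (bwdList m S).length) 0 := by
  have hsorted : (List.ofFn (bwdW m S)).Pairwise (· ≥ ·) := by
    rw [List.pairwise_ofFn]
    intro i j hij
    exact bwdW_anti m S hS i j (le_of_lt hij)
  have := sorted_desc_decomp _ hsorted
  rw [show (List.ofFn (bwdW m S)).length = m by simp] at this
  exact this.symm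

lemma bwdList_getD (m : ℕ) (S : Finset ℕ) (hS : S.card = m) (i : Fin m) :
    (bwdList m S).getD i 0 = bwdW m S i := by
  rw [← getD_append_zeros (bwdList m S) (m - (bwdList m S).length) i]
  rw [← bwd_key m S hS]
  rw [List.getD_eq_getElem _ _ (by simp), List.getElem_ofFn]

lemma dlist_bwdF (m : ℕ) (S : Finset ℕ) (hS : S.card = m) :
    dlist (bwdF m S) = bwdList m S := by
  have hsorted : (bwdList m S).Pairwise (· ≥ ·) := by
    unfold bwdList
    apply List.Pairwise.filter
    rw [List.pairwise_ofFn]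
    intro i j hij
    exact bwdW_anti m S hS i j (le_of_lt hij)
  apply List.Perm.eq_of_pairwise' (dlist_sorted _) hsorted
  apply Multiset.coe_eq_coe.mp
  rw [dlist_coe, bwdF_parts]

lemma FA4 (m : ℕ) (S : Finset ℕ) (hS : S.card = m) : fwdF m (bwdF m S) = S := by
  have hG : ∀ i : Fin m, fwdG m (bwdF m S) i = bwdE m S i := by
    intro i
    unfold fwdG
    rw [dlist_bwdF m S hS, bwdList_getD m S hS]
    have h2 := bwdE_ge m S hS i
    unfold bwdW
    omega
  have hlen : (S.sort (· ≤ ·)).length = m := by rw [Finset.length_sort, hS]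
  ext x
  rw [fwdF, Finset.mem_image]
  constructor
  · rintro ⟨i, -, rfl⟩
    rw [hG i]
    unfold bwdE
    rw [List.getD_eq_getElem _ _ (by have := i.isLt; omega)]
    rw [← Finset.mem_sort (α := ℕ) (· ≤ ·)]
    exact List.getElem_mem _
  · intro hx
    have hx' : x ∈ S.sort (· ≤ ·) := (Finset.mem_sort _).mpr hx
    obtain ⟨ρ, hρ, hval⟩ := List.mem_iff_getElem.mp hx'
    rw [hlen] at hρ
    refine ⟨⟨m - 1 - ρ, by omega⟩, Finset.mem_univ _, ?_⟩
    rw [hG]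
    unfold bwdE
    simp only
    rw [show m - 1 - (m - 1 - ρ) = ρ by omega]
    rw [List.getD_eq_getElem _ _ (by omega)]
    exact hval

variable {t : ℕ}

/-! ### residue decomposition of finsets -/

lemma tq_mod (ht : 1 ≤ t) (q : ℕ) (r : Fin t) : (t * q + (r:ℕ)) % t = (r:ℕ) := by
  rw [Nat.mul_add_mod]; exact Nat.mod_eq_of_lt r.isLt

lemma tq_div (ht : 1 ≤ t) (q : ℕ) (r : Fin t) : (t * q + (r:ℕ)) / t = q := by
  rw [Nat.mul_add_div (by omega), Nat.div_eq_of_lt r.isLt, add_zero]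

def spl (t : ℕ) (S : Finset ℕ) (r : Fin t) : Finset ℕ :=
  (S.filter (fun x => x % t = (r : ℕ))).image (· / t)

def comb (t : ℕ) (V : Fin t → Finset ℕ) : Finset ℕ :=
  Finset.univ.biUnion (fun r : Fin t => (V r).image (fun q => t * q + (r : ℕ)))

lemma mem_comb (ht : 1 ≤ t) (V : Fin t → Finset ℕ) (x : ℕ) :
    x ∈ comb t V ↔ x / t ∈ V ⟨x % t, Nat.mod_lt _ ht⟩ := by
  unfold comb
  simp only [Finset.mem_biUnion, Finset.mem_univ, true_and, Finset.mem_image]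
  constructor
  · rintro ⟨r, q, hq, rfl⟩
    rw [tq_div ht]
    convert hq using 2
    exact Fin.ext (tq_mod ht q r)
  · intro hx
    exact ⟨⟨x % t, Nat.mod_lt _ ht⟩, x / t, hx, Nat.div_add_mod x t⟩

lemma spl_comb (ht : 1 ≤ t) (V : Fin t → Finset ℕ) : spl t (comb t V) = V := by
  funext r
  ext q
  unfold spl
  simp only [Finset.mem_image, Finset.mem_filter]
  constructor
  · rintro ⟨x, ⟨hx, hmod⟩, rfl⟩
    rw [mem_comb ht] at hx
    convert hx using 2
    exact Fin.ext hmod.symm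
  · intro hq
    refine ⟨t * q + (r:ℕ), ⟨?_, tq_mod ht q r⟩, tq_div ht q r⟩
    rw [mem_comb ht, tq_div ht]
    convert hq using 2
    exact Fin.ext (tq_mod ht q r)

lemma comb_spl (ht : 1 ≤ t) (S : Finset ℕ) : comb t (spl t S) = S := by
  ext x
  rw [mem_comb ht]
  unfold spl
  simp only [Finset.mem_image, Finset.mem_filter]
  constructor
  · rintro ⟨a, ⟨ha, hmod⟩, hdiv⟩
    have h1 : t * (a / t) + a % t = a := Nat.div_add_mod a t
    rw [hdiv, hmod] at h1
    have h2 : t * (x / t) + x % t = x := Nat.div_add_mod x t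
    have hax : a = x := h1.symm.trans h2
    rwa [hax] at ha
  · intro hx
    exact ⟨x, ⟨hx, rfl⟩, rfl⟩

lemma comb_inj_on (ht : 1 ≤ t) (r : Fin t) : ∀ x y : ℕ, t * x + (r:ℕ) = t * y + (r:ℕ) → x = y := by
  intro x y h
  have h1 : t * x = t * y := by omega
  exact Nat.eq_of_mul_eq_mul_left (by omega) h1

lemma comb_disj (ht : 1 ≤ t) (V : Fin t → Finset ℕ) (a b : Fin t) (hab : a ≠ b) :
    Disjoint ((V a).image (fun q => t * q + (a:ℕ))) ((V b).image (fun q => t * q + (b:ℕ))) := by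
  rw [Finset.disjoint_left]
  rintro x hx hx'
  simp only [Finset.mem_image] at hx hx'
  obtain ⟨q, _, rfl⟩ := hx
  obtain ⟨q', _, h⟩ := hx'
  apply hab
  apply Fin.ext
  calc (a:ℕ) = (t * q + (a:ℕ)) % t := (tq_mod ht q a).symm
    _ = (t * q' + (b:ℕ)) % t := by rw [h]
    _ = (b:ℕ) := tq_mod ht q' b

lemma comb_card (ht : 1 ≤ t) (V : Fin t → Finset ℕ) :
    (comb t V).card = ∑ r : Fin t, (V r).card := by
  unfold comb
  rw [Finset.card_biUnion (fun a _ b _ hab => comb_disj ht V a b hab)]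
  congr 1
  funext r
  rw [Finset.card_image_of_injective _ (fun x y h => comb_inj_on ht r x y h)]

lemma comb_sum (ht : 1 ≤ t) (V : Fin t → Finset ℕ) :
    (comb t V).sum id = ∑ r : Fin t, (t * (V r).sum id + (r:ℕ) * (V r).card) := by
  unfold comb
  rw [Finset.sum_biUnion (fun a _ b _ hab => comb_disj ht V a b hab)]
  congr 1
  funext r
  rw [Finset.sum_image (fun x _ y _ h => comb_inj_on ht r x y h)]
  simp only [id_eq]
  rw [Finset.sum_add_distrib, ← Finset.mul_sum, Finset.sum_const, smul_eq_mul]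
  ring

/-! ### the quadratic form -/

def Qz (t : ℕ) (c : Fin t → ℤ) : ℤ :=
  (t : ℤ) * ((∑ i, c i ^ 2) / 2) + ∑ i : Fin t, ((i : ℕ) : ℤ) * c i

lemma sum_sq_even (c : Fin t → ℤ) (h0 : (∑ i, c i) = 0) : 2 ∣ ∑ i, c i ^ 2 := by
  have h1 : ∀ i : Fin t, ∃ d : ℤ, c i ^ 2 = c i + 2 * d := by
    intro i
    obtain ⟨d, hd⟩ := Int.even_mul_succ_self (c i - 1)
    exact ⟨d, by nlinarith⟩
  choose d hd using h1
  refine ⟨∑ i, d i, ?_⟩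
  calc ∑ i, c i ^ 2 = ∑ i, (c i + 2 * d i) := Finset.sum_congr rfl (fun i _ => hd i)
    _ = (∑ i, c i) + 2 * ∑ i, d i := by rw [Finset.sum_add_distrib, ← Finset.mul_sum]
    _ = 2 * ∑ i, d i := by rw [h0]; ring

lemma two_Qz (c : Fin t → ℤ) (h0 : (∑ i, c i) = 0) :
    2 * Qz t c = (t:ℤ) * (∑ i, c i ^ 2) + 2 * ∑ i : Fin t, ((i:ℕ):ℤ) * c i := by
  obtain ⟨D, hD⟩ := sum_sq_even c h0
  unfold Qz
  rw [hD, Int.mul_ediv_cancel_left _ (by norm_num)]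
  ring

lemma two_Qz_ge (ht : 1 ≤ t) (c : Fin t → ℤ) (h0 : (∑ i, c i) = 0) :
    (∑ i, |c i|) ≤ 2 * Qz t c := by
  rw [two_Qz c h0]
  have key : ∑ i : Fin t, ((t:ℤ) * c i ^ 2 + (2 * ((i:ℕ):ℤ) - t + 1) * c i)
      = (t:ℤ) * (∑ i, c i ^ 2) + 2 * (∑ i : Fin t, ((i:ℕ):ℤ) * c i) + (1 - t) * ∑ i, c i := by
    rw [Finset.mul_sum, Finset.mul_sum, Finset.mul_sum]
    rw [← Finset.sum_add_distrib, ← Finset.sum_add_distrib]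
    exact Finset.sum_congr rfl (fun i _ => by ring)
  have key2 : (t:ℤ) * (∑ i, c i ^ 2) + 2 * ∑ i : Fin t, ((i:ℕ):ℤ) * c i
      = ∑ i : Fin t, ((t:ℤ) * c i ^ 2 + (2 * ((i:ℕ):ℤ) - t + 1) * c i) := by
    rw [key, h0]; ring
  rw [key2]
  apply Finset.sum_le_sum
  intro i _
  have hi : ((i:ℕ):ℤ) ≤ (t:ℤ) - 1 := by
    have := i.isLt; omega
  have hi0 : (0:ℤ) ≤ ((i:ℕ):ℤ) := Int.natCast_nonneg _
  have ht' : (1:ℤ) ≤ (t:ℤ) := by exact_mod_cast ht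
  rcases le_or_gt (c i) (-1) with hc | hc
  · rw [abs_of_nonpos (by omega)]
    have h1 : (t:ℤ) * c i ≤ (t:ℤ) * (-1) := by
      apply mul_le_mul_of_nonneg_left hc (by omega)
    have h2 : (t:ℤ) * c i + 2 * ((i:ℕ):ℤ) - t + 2 ≤ 0 := by linarith
    have h3 : (0:ℤ) ≤ (-c i) * (-((t:ℤ) * c i + 2 * ((i:ℕ):ℤ) - t + 2)) :=
      mul_nonneg (by linarith) (by linarith)
    nlinarith
  · rcases le_or_gt 1 (c i) with hc2 | hc2
    · rw [abs_of_nonneg (by omega)]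
      have h1 : (0:ℤ) ≤ (t:ℤ) * c i * (c i - 1) :=
        mul_nonneg (mul_nonneg (by omega) (by omega)) (by omega)
      have h2 : (0:ℤ) ≤ 2 * ((i:ℕ):ℤ) * c i := mul_nonneg (by linarith) (by omega)
      nlinarith
    · have : c i = 0 := by omega
      rw [this]
      simp

lemma Qz_nonneg (ht : 1 ≤ t) (c : Fin t → ℤ) (h0 : (∑ i, c i) = 0) : 0 ≤ Qz t c := by
  have h1 := two_Qz_ge ht c h0
  have h2 : (0:ℤ) ≤ ∑ i, |c i| := Finset.sum_nonneg (fun i _ => abs_nonneg _)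
  omega

lemma abs_c_le (ht : 1 ≤ t) (c : Fin t → ℤ) (h0 : (∑ i, c i) = 0) (r : Fin t) :
    |c r| ≤ 2 * Qz t c := by
  have h1 := two_Qz_ge ht c h0
  have h2 : |c r| ≤ ∑ i, |c i| :=
    Finset.single_le_sum (fun i _ => abs_nonneg (c i)) (Finset.mem_univ r)
  omega

/-! ### the weight identity -/

lemma gaussZ (M : ℕ) : 2 * ((∑ i ∈ Finset.range M, i : ℕ) : ℤ) = (M:ℤ)^2 - M := by
  rcases M with _ | K
  · simp
  · have h2 := Finset.sum_range_id_mul_two (K+1)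
    rw [Nat.succ_sub_one] at h2
    have h3 : ((∑ i ∈ Finset.range (K+1), i : ℕ) : ℤ) * 2 = ((K:ℤ)+1) * K := by
      exact_mod_cast h2
    push_cast at h3 ⊢
    linear_combination h3

lemma WI (t s : ℕ) (ht : 1 ≤ t) (nv kv σv : Fin t → ℕ) (n : ℕ)
    (hA : ∑ r, nv r = t * s)
    (hσ : ∀ r, σv r = kv r + ∑ i ∈ Finset.range (nv r), i)
    (hsum : n + ∑ i ∈ Finset.range (t * s), i = ∑ r : Fin t, (t * σv r + (r:ℕ) * nv r)) :
    (n : ℤ) = Qz t (fun r => (nv r : ℤ) - s) + t * ∑ r, (kv r : ℤ) := by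
  set c : Fin t → ℤ := fun r => (nv r : ℤ) - s with hc
  have hSN : (∑ r, ((nv r : ℕ):ℤ)) = (t:ℤ) * s := by
    have h1 : ((∑ r, nv r : ℕ) : ℤ) = ((t * s : ℕ) : ℤ) := by exact_mod_cast hA
    push_cast at h1
    exact h1
  have hc0 : (∑ r, c r) = 0 := by
    have e0 : ∑ r, c r = (∑ r, ((nv r : ℕ):ℤ)) - ∑ _r : Fin t, (s:ℤ) := by
      rw [← Finset.sum_sub_distrib]
    rw [e0, hSN, Finset.sum_const, Finset.card_univ, Fintype.card_fin, nsmul_eq_mul]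
    ring
  have hQ2 := two_Qz c hc0
  have hsq : (∑ r, c r ^ 2)
      = (∑ r, ((nv r:ℤ))^2) - 2 * s * (∑ r, ((nv r : ℕ):ℤ)) + (t:ℤ) * (s:ℤ)^2 := by
    have e1 : ∑ r, c r ^ 2
        = ∑ r, (((nv r:ℤ))^2 - 2 * (s:ℤ) * ((nv r : ℕ):ℤ) + (s:ℤ)^2) :=
      Finset.sum_congr rfl (fun r _ => by rw [hc]; ring)
    rw [e1, Finset.sum_add_distrib, Finset.sum_sub_distrib, ← Finset.mul_sum,
      Finset.sum_const, Finset.card_univ, Fintype.card_fin, nsmul_eq_mul]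
    try ring
  have hBsum : (∑ r : Fin t, ((r:ℕ):ℤ) * c r)
      = (∑ r : Fin t, ((r:ℕ):ℤ) * ((nv r : ℕ):ℤ)) - (s:ℤ) * (∑ r : Fin t, ((r:ℕ):ℤ)) := by
    have e1 : ∑ r : Fin t, ((r:ℕ):ℤ) * c r
        = ∑ r : Fin t, (((r:ℕ):ℤ) * ((nv r : ℕ):ℤ) - (s:ℤ) * ((r:ℕ):ℤ)) :=
      Finset.sum_congr rfl (fun r _ => by rw [hc]; ring)
    rw [e1, Finset.sum_sub_distrib, ← Finset.mul_sum]
  have hST : 2 * (∑ r : Fin t, ((r:ℕ):ℤ)) = (t:ℤ)^2 - t := by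
    have h1 : (∑ r : Fin t, ((r:ℕ):ℤ)) = ((∑ i ∈ Finset.range t, i : ℕ) : ℤ) := by
      rw [← Fin.sum_univ_eq_sum_range (fun i => i) t, Nat.cast_sum]
    rw [h1, gaussZ t]
  have hσZ : ∀ r : Fin t, 2 * ((σv r : ℕ):ℤ) = 2 * ((kv r : ℕ):ℤ) + (((nv r:ℤ))^2 - ((nv r : ℕ):ℤ)) := by
    intro r
    have h2 : ((σv r : ℕ):ℤ) = ((kv r : ℕ):ℤ) + ((∑ i ∈ Finset.range (nv r), i : ℕ):ℤ) := by
      exact_mod_cast hσ r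
    have h3 := gaussZ (nv r)
    linarith
  have hσsum : 2 * (∑ r, ((σv r : ℕ):ℤ))
      = 2 * (∑ r, ((kv r : ℕ):ℤ)) + ((∑ r, ((nv r:ℤ))^2) - (∑ r, ((nv r : ℕ):ℤ))) := by
    have e : ∑ r : Fin t, (2 * ((σv r : ℕ):ℤ))
        = ∑ r : Fin t, (2 * ((kv r : ℕ):ℤ) + (((nv r:ℤ))^2 - ((nv r : ℕ):ℤ))) :=
      Finset.sum_congr rfl (fun r _ => hσZ r)
    rw [← Finset.mul_sum] at e
    rw [e, Finset.sum_add_distrib, Finset.sum_sub_distrib, ← Finset.mul_sum]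
  have h4 : (∑ r : Fin t, (((t:ℕ) * σv r + (r:ℕ) * nv r : ℕ):ℤ))
      = (t:ℤ) * (∑ r, ((σv r : ℕ):ℤ)) + (∑ r : Fin t, ((r:ℕ):ℤ) * ((nv r : ℕ):ℤ)) := by
    rw [Finset.mul_sum, ← Finset.sum_add_distrib]
    exact Finset.sum_congr rfl (fun r _ => by push_cast; ring)
  have hsumZ : 2 * (n:ℤ) + (((t:ℤ) * s)^2 - (t:ℤ) * s)
      = 2 * (t:ℤ) * (∑ r, ((σv r : ℕ):ℤ)) + 2 * (∑ r : Fin t, ((r:ℕ):ℤ) * ((nv r : ℕ):ℤ)) := by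
    have h2 : ((n + ∑ i ∈ Finset.range (t * s), i : ℕ):ℤ)
        = ((∑ r : Fin t, (t * σv r + (r:ℕ) * nv r) : ℕ):ℤ) := by exact_mod_cast hsum
    have h5 : ((∑ r : Fin t, (t * σv r + (r:ℕ) * nv r) : ℕ):ℤ)
        = ∑ r : Fin t, (((t:ℕ) * σv r + (r:ℕ) * nv r : ℕ):ℤ) := by push_cast; ring
    rw [h5, h4] at h2
    have h3 := gaussZ (t * s)
    push_cast at h2 h3 ⊢
    linarith
  have key : 2 * (n:ℤ) = 2 * Qz t c + 2 * ((t:ℤ) * ∑ r, ((kv r : ℕ):ℤ)) := by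
    linear_combination hsumZ + (t:ℤ) * hσsum - hQ2 - (t:ℤ) * hsq - 2 * hBsum
      + (s:ℤ) * hST + (2*(s:ℤ)*(t:ℤ) - t) * hSN
  linarith

def sOf (n : ℕ) : ℕ := 3 * n + 1

lemma ms_card_le_sum (M : Multiset ℕ) : (∀ x ∈ M, 0 < x) → Multiset.card M ≤ M.sum :=
  Multiset.induction_on M (by simp)
    (by intro a s ih h
        rw [Multiset.card_cons, Multiset.sum_cons]
        have h1 := h a (Multiset.mem_cons_self a s)
        have h2 := ih (fun x hx => h x (Multiset.mem_cons_of_mem hx))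
        omega)

lemma parts_card_le (q : Lam) : q.2.parts.card ≤ q.1 := by
  have h := ms_card_le_sum q.2.parts (fun x hx => q.2.parts_pos hx)
  rw [q.2.parts_sum] at h
  exact h

def phi1 (t : ℕ) (q : Lam) : Fin t → ℤ :=
  fun r => ((spl t (fwdF (t * sOf q.1) q) r).card : ℤ) - (sOf q.1 : ℤ)

def phi2 (t : ℕ) (q : Lam) : Fin t → Lam :=
  fun r => bwdF (spl t (fwdF (t * sOf q.1) q) r).card (spl t (fwdF (t * sOf q.1) q) r)

def psiN (t : ℕ) (c : Fin t → ℤ) (μ : Fin t → Lam) : ℕ :=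
  (Qz t c + t * ∑ r, ((μ r).1 : ℤ)).toNat

def psiF (t : ℕ) (c : Fin t → ℤ) (μ : Fin t → Lam) : Lam :=
  bwdF (t * sOf (psiN t c μ)) (comb t (fun r => fwdF ((sOf (psiN t c μ) + c r).toNat) (μ r)))

section PhiPsi

variable {t : ℕ}

lemma phi_hparts (ht : 1 ≤ t) (q : Lam) : q.2.parts.card ≤ t * sOf q.1 := by
  have h1 := parts_card_le q
  have h2 : sOf q.1 ≤ t * sOf q.1 := Nat.le_mul_of_pos_left _ (by omega)
  unfold sOf at h2 ⊢
  omega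

lemma phi_spec (ht : 1 ≤ t) (q : Lam) :
    (∑ r, phi1 t q r) = 0 ∧
    (q.1 : ℤ) = Qz t (phi1 t q) + t * ∑ r, ((phi2 t q r).1 : ℤ) ∧
    psiF t (phi1 t q) (phi2 t q) = q := by
  classical
  set n := q.1 with hn
  set s := sOf n with hs
  set N := t * s with hN
  set S := fwdF N q with hS
  set V : Fin t → Finset ℕ := spl t S with hV
  have hparts : q.2.parts.card ≤ N := phi_hparts ht q
  have hScard : S.card = N := FA1 N q
  have hSsum : S.sum id = n + ∑ i ∈ Finset.range N, i := FA2 N q hparts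
  have hVcomb : comb t V = S := comb_spl ht S
  have hcardsum : ∑ r, (V r).card = N := by
    rw [← comb_card ht V, hVcomb, hScard]
  -- the quotient partitions
  have hVr : ∀ r, fwdF (V r).card (bwdF (V r).card (V r)) = V r :=
    fun r => FA4 _ _ rfl
  have hμparts : ∀ r, (bwdF (V r).card (V r)).2.parts.card ≤ (V r).card :=
    fun r => FA5 _ _
  have hσ : ∀ r, (V r).sum id
      = (bwdF (V r).card (V r)).1 + ∑ i ∈ Finset.range (V r).card, i := by
    intro r
    have h := FA2 (V r).card (bwdF (V r).card (V r)) (hμparts r)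
    rwa [hVr r] at h
  have hsum : n + ∑ i ∈ Finset.range N, i
      = ∑ r : Fin t, (t * (V r).sum id + (r:ℕ) * (V r).card) := by
    rw [← comb_sum ht V, hVcomb, ← hSsum]
  have hweight := WI t s ht (fun r => (V r).card) (fun r => (bwdF (V r).card (V r)).1)
    (fun r => (V r).sum id) n hcardsum hσ hsum
  have hphi1 : phi1 t q = fun r => ((V r).card : ℤ) - s := rfl
  have hphi2 : phi2 t q = fun r => bwdF (V r).card (V r) := rfl
  have hc0 : (∑ r, phi1 t q r) = 0 := by
    rw [hphi1]
    have e0 : ∑ r : Fin t, (((V r).card : ℤ) - s)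
        = (∑ r, (((V r).card : ℕ):ℤ)) - ∑ _r : Fin t, (s:ℤ) := by
      rw [← Finset.sum_sub_distrib]
    rw [e0, Finset.sum_const, Finset.card_univ, Fintype.card_fin, nsmul_eq_mul]
    have : (∑ r, (((V r).card : ℕ):ℤ)) = ((∑ r, (V r).card : ℕ) : ℤ) := by
      rw [Nat.cast_sum]
    rw [this, hcardsum, hN]
    push_cast
    ring
  have hw : (q.1 : ℤ) = Qz t (phi1 t q) + t * ∑ r, ((phi2 t q r).1 : ℤ) := by
    rw [hphi1, hphi2, ← hn]
    exact hweight
  refine ⟨hc0, hw, ?_⟩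
  -- roundtrip
  have hpsiN : psiN t (phi1 t q) (phi2 t q) = n := by
    unfold psiN
    rw [hphi1, hphi2] at *
    rw [← hweight]
    exact Int.toNat_natCast n
  have hmr : ∀ r : Fin t, ((s : ℤ) + (phi1 t q r)).toNat = (V r).card := by
    intro r
    rw [hphi1]
    have : (s:ℤ) + (((V r).card : ℤ) - s) = ((V r).card : ℤ) := by ring
    rw [this, Int.toNat_natCast]
  unfold psiF
  rw [hpsiN]
  have harg : (fun r => fwdF ((sOf n + phi1 t q r).toNat) (phi2 t q r)) = V := by
    funext r
    rw [show ((sOf n : ℕ) : ℤ) = (s : ℤ) by rw [hs]] at *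
    rw [hmr r, hphi2]
    exact hVr r
  rw [harg, hVcomb, ← hs, ← hN, hS]
  exact FA3 N q hparts

lemma psi_spec (ht : 1 ≤ t) (c : Fin t → ℤ) (μ : Fin t → Lam) (hc0 : (∑ r, c r) = 0) :
    ((psiF t c μ).1 : ℤ) = Qz t c + t * ∑ r, ((μ r).1 : ℤ) ∧
    phi1 t (psiF t c μ) = c ∧ phi2 t (psiF t c μ) = μ := by
  classical
  set K : ℤ := ∑ r, ((μ r).1 : ℤ) with hK
  have hK0 : 0 ≤ K := Finset.sum_nonneg (fun r _ => Int.natCast_nonneg _)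
  have hQ0 : 0 ≤ Qz t c := Qz_nonneg ht c hc0
  set n := psiN t c μ with hn
  have hnI : (n : ℤ) = Qz t c + t * K := by
    rw [hn]
    unfold psiN
    rw [← hK]
    exact Int.toNat_of_nonneg (by positivity)
  set s := sOf n with hs
  have hsn : (s : ℤ) = 3 * n + 1 := by rw [hs]; unfold sOf; push_cast; ring
  have hQn : Qz t c ≤ (n:ℤ) := by
    rw [hnI]
    have : 0 ≤ (t:ℤ) * K := by positivity
    omega
  have hcb : ∀ r, |c r| ≤ 2 * (n:ℤ) := by
    intro r
    have h1 := abs_c_le ht c hc0 r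
    omega
  have hmpos : ∀ r : Fin t, 0 ≤ (s:ℤ) + c r := by
    intro r
    have h1 := hcb r
    rw [hsn]
    have := abs_le.mp h1
    omega
  have hm : ∀ r : Fin t, (((s:ℤ) + c r).toNat : ℤ) = (s:ℤ) + c r :=
    fun r => Int.toNat_of_nonneg (hmpos r)
  have hkn : ∀ r, ((μ r).1 : ℤ) ≤ n := by
    intro r
    have h1 : ((μ r).1:ℤ) ≤ K :=
      Finset.single_le_sum (f := fun r => ((μ r).1 : ℤ)) (fun i _ => Int.natCast_nonneg _)
        (Finset.mem_univ r)
    have h2 : K ≤ (t:ℤ) * K := le_mul_of_one_le_left hK0 (by exact_mod_cast ht)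
    omega
  have hμparts : ∀ r, (μ r).2.parts.card ≤ ((s:ℤ) + c r).toNat := by
    intro r
    have h1 : ((μ r).2.parts.card : ℤ) ≤ ((μ r).1 : ℤ) := by
      exact_mod_cast parts_card_le (μ r)
    have h2 := hkn r
    have h3 := hcb r
    have := abs_le.mp h3
    have h4 := hm r
    omega
  set mv : Fin t → ℕ := fun r => ((s:ℤ) + c r).toNat with hmv
  set V : Fin t → Finset ℕ := fun r => fwdF (mv r) (μ r) with hV
  have hVcard : ∀ r, (V r).card = mv r := fun r => FA1 _ _
  have hVsum : ∀ r, (V r).sum id = (μ r).1 + ∑ i ∈ Finset.range (mv r), i :=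
    fun r => FA2 _ _ (hμparts r)
  set S := comb t V with hS
  have hsummv : ∑ r, mv r = t * s := by
    have h1 : ((∑ r, mv r : ℕ) : ℤ) = ∑ r : Fin t, ((s:ℤ) + c r) := by
      rw [Nat.cast_sum]
      exact Finset.sum_congr rfl (fun r _ => hm r)
    have h2 : ∑ r : Fin t, ((s:ℤ) + c r) = t * s := by
      rw [Finset.sum_add_distrib, hc0, Finset.sum_const, Finset.card_univ, Fintype.card_fin,
        nsmul_eq_mul]
      push_cast
      ring
    have : ((∑ r, mv r : ℕ) : ℤ) = ((t * s : ℕ) : ℤ) := by rw [h1, h2]; push_cast; ring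
    exact_mod_cast this
  have hScard : S.card = t * s := by
    rw [hS, comb_card ht V]
    calc ∑ r, (V r).card = ∑ r, mv r := Finset.sum_congr rfl (fun r _ => hVcard r)
      _ = t * s := hsummv
  -- q' = psiF
  have hpsiF : psiF t c μ = bwdF (t * s) S := rfl
  set q' := bwdF (t * s) S with hq'
  have hq'parts : q'.2.parts.card ≤ t * s := FA5 _ _
  have hfwd : fwdF (t * s) q' = S := FA4 _ _ hScard
  have hq'sum : S.sum id = q'.1 + ∑ i ∈ Finset.range (t * s), i := by
    have h := FA2 (t * s) q' hq'parts
    rwa [hfwd] at h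
  have hsum : q'.1 + ∑ i ∈ Finset.range (t * s), i
      = ∑ r : Fin t, (t * (V r).sum id + (r:ℕ) * (V r).card) := by
    rw [← hq'sum, hS, comb_sum ht V]
  have hsum' : q'.1 + ∑ i ∈ Finset.range (t * s), i
      = ∑ r : Fin t, (t * (V r).sum id + (r:ℕ) * mv r) := by
    rw [hsum]
    exact Finset.sum_congr rfl (fun r _ => by rw [hVcard r])
  have hσ : ∀ r, (V r).sum id = (μ r).1 + ∑ i ∈ Finset.range (mv r), i := hVsum
  have hweight := WI t s ht mv (fun r => (μ r).1) (fun r => (V r).sum id) q'.1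
    hsummv hσ hsum'
  have hcv : (fun r => ((mv r : ℕ):ℤ) - s) = c := by
    funext r
    rw [hmv]
    rw [hm r]
    ring
  rw [hcv] at hweight
  have hq'1 : (q'.1 : ℤ) = Qz t c + t * K := by rw [hweight, hK]
  have hq'n : q'.1 = n := by
    have : (q'.1 : ℤ) = (n : ℤ) := by rw [hq'1, hnI]
    exact_mod_cast this
  refine ⟨by rw [hpsiF, hq'1, hK], ?_, ?_⟩
  · funext r
    unfold phi1
    rw [hpsiF, hq'n, ← hs, hfwd, hS, spl_comb ht V, hVcard r, hmv]
    rw [hm r]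
    ring
  · funext r
    unfold phi2
    rw [hpsiF, hq'n, ← hs, hfwd, hS, spl_comb ht V, hVcard r]
    exact FA3 _ _ (hμparts r)

end PhiPsi

section Analysis

open Filter Topology

variable {𝕜 : Type*} [NormedField 𝕜] [CompleteSpace 𝕜]

lemma tsum_mul_prod {α β : Type*} (f : α → 𝕜) (g : β → 𝕜)
    (hf : Summable fun a => ‖f a‖) (hg : Summable fun b => ‖g b‖) :
    Summable (fun p : α × β => ‖f p.1 * g p.2‖) ∧
      (∑' p : α × β, f p.1 * g p.2) = (∑' a, f a) * (∑' b, g b) := by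
  have hs : Summable (fun p : α × β => ‖f p.1 * g p.2‖) := by
    have h2 := hf.mul_of_nonneg hg (fun _ => norm_nonneg _) (fun _ => norm_nonneg _)
    apply Summable.congr h2
    intro p
    rw [norm_mul]
  refine ⟨hs, ?_⟩
  rw [Summable.tsum_prod' hs.of_norm (fun b => hs.of_norm.prod_factor b)]
  calc ∑' a, ∑' b, f a * g b = ∑' a, f a * ∑' b, g b := tsum_congr (fun a => tsum_mul_left)
    _ = (∑' a, f a) * ∑' b, g b := tsum_mul_right

def snocEquiv (K : ℕ) (κ : Type*) : (Fin (K+1) → κ) ≃ (Fin K → κ) × κ where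
  toFun v := (fun i => v i.castSucc, v (Fin.last K))
  invFun w := Fin.snoc w.1 w.2
  left_inv v := by
    funext i
    refine Fin.lastCases ?_ ?_ i
    · simp
    · intro j; simp
  right_inv w := by
    refine Prod.ext ?_ ?_
    · funext j; simp
    · simp

lemma tsum_pi_fam {κ : Type*} : ∀ (K : ℕ) (f : Fin K → κ → 𝕜), (∀ k, Summable fun x => ‖f k x‖) →
    Summable (fun v : Fin K → κ => ‖∏ k, f k (v k)‖) ∧
      (∑' v : Fin K → κ, ∏ k, f k (v k)) = ∏ k, ∑' x, f k x := by
  intro K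
  induction K with
  | zero =>
    intro f hf
    constructor
    · exact .of_finite
    · rw [tsum_eq_single (default : Fin 0 → κ) (fun b hb => absurd (Subsingleton.elim b _) hb)]
      simp
  | succ K ih =>
    intro f hf
    set e := snocEquiv K κ with he
    set g : (Fin K → κ) → 𝕜 := fun w => ∏ k : Fin K, f k.castSucc (w k) with hg
    set h : κ → 𝕜 := fun x => f (Fin.last K) x with hh
    obtain ⟨ihs, iht⟩ := ih (fun k => f k.castSucc) (fun k => hf _)
    obtain ⟨hps, hpt⟩ := tsum_mul_prod g h ihs (hf _)
    have hsplit : ∀ v : Fin (K+1) → κ, ∏ k, f k (v k) = g (e v).1 * h (e v).2 := by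
      intro v
      rw [Fin.prod_univ_castSucc]
      rfl
    constructor
    · have heq : (fun v : Fin (K+1) → κ => ‖∏ k, f k (v k)‖)
          = (fun p : (Fin K → κ) × κ => ‖g p.1 * h p.2‖) ∘ e := by
        funext v
        simp only [Function.comp_apply]
        rw [hsplit v]
      rw [heq]
      exact (Equiv.summable_iff e).mpr hps
    · have h1 : (∑' v : Fin (K+1) → κ, ∏ k, f k (v k))
          = ∑' p : (Fin K → κ) × κ, g p.1 * h p.2 := by
        rw [← Equiv.tsum_eq e (fun p : (Fin K → κ) × κ => g p.1 * h p.2)]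
        exact tsum_congr (fun v => hsplit v)
      rw [Fin.prod_univ_castSucc, h1, hpt, iht]

lemma tsum_pi_pow {κ : Type*} (f : κ → 𝕜) (hf : Summable fun x => ‖f x‖) (K : ℕ) :
    Summable (fun v : Fin K → κ => ‖∏ k, f (v k)‖) ∧
      (∑' v : Fin K → κ, ∏ k, f (v k)) = (∑' x, f x) ^ K := by
  have := tsum_pi_fam K (fun _ => f) (fun _ => hf)
  rwa [Finset.prod_const, Finset.card_univ, Fintype.card_fin] at this

end Analysis

section Mult

lemma multiset_sum_sum {ι : Type*} (s : Finset ι) (f : ι → Multiset ℕ) :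
    (∑ i ∈ s, f i).sum = ∑ i ∈ s, (f i).sum := by
  classical
  induction s using Finset.induction_on with
  | empty => simp
  | insert _ _ h ih =>
    rename_i a s
    rw [Finset.sum_insert h, Finset.sum_insert h, Multiset.sum_add, ih]

def multParts (N : ℕ) (v : Fin N → ℕ) : Multiset ℕ :=
  ∑ k : Fin N, Multiset.replicate (v k) ((k:ℕ)+1)

lemma multParts_sum (N : ℕ) (v : Fin N → ℕ) :
    (multParts N v).sum = ∑ k : Fin N, ((k:ℕ)+1) * v k := by
  unfold multParts
  rw [multiset_sum_sum]
  apply Finset.sum_congr rfl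
  intro k _
  rw [Multiset.sum_replicate, smul_eq_mul]
  ring

lemma multParts_pos (N : ℕ) (v : Fin N → ℕ) : ∀ {x : ℕ}, x ∈ multParts N v → 0 < x := by
  intro x hx
  unfold multParts at hx
  rw [Multiset.mem_sum] at hx
  obtain ⟨k, _, hk⟩ := hx
  rw [Multiset.eq_of_mem_replicate hk]
  omega

def multL (N : ℕ) (v : Fin N → ℕ) : Lam :=
  ⟨(multParts N v).sum, ⟨multParts N v, multParts_pos N v, rfl⟩⟩

lemma multL_fst (N : ℕ) (v : Fin N → ℕ) :
    (multL N v).1 = ∑ k : Fin N, ((k:ℕ)+1) * v k := multParts_sum N v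

lemma multL_parts (N : ℕ) (v : Fin N → ℕ) : (multL N v).2.parts = multParts N v := rfl

lemma count_multParts (N : ℕ) (v : Fin N → ℕ) (a : ℕ) :
    (multParts N v).count a = ∑ k : Fin N, if (k:ℕ)+1 = a then v k else 0 := by
  unfold multParts
  rw [Multiset.count_sum']
  exact Finset.sum_congr rfl (fun k _ => by rw [Multiset.count_replicate])

lemma multL_recover (N : ℕ) (q : Lam) (h : ∀ x ∈ q.2.parts, x ≤ N) :
    multL N (fun k => q.2.parts.count ((k:ℕ)+1)) = q := by
  apply Lam_ext
  rw [multL_parts]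
  apply Multiset.ext.mpr
  intro a
  rw [count_multParts]
  rcases a with _ | b
  · have h1 : ∀ k : Fin N, (if (k:ℕ)+1 = 0 then q.2.parts.count ((k:ℕ)+1) else 0) = 0 := by
      intro k; simp
    rw [Finset.sum_congr rfl (fun k _ => h1 k), Finset.sum_const_zero]
    symm
    rw [Multiset.count_eq_zero]
    intro hmem
    exact absurd (q.2.parts_pos hmem) (by omega)
  · by_cases hb : b < N
    · have h1 : ∀ k : Fin N, (if (k:ℕ)+1 = b+1 then q.2.parts.count ((k:ℕ)+1) else 0)
          = (if k = (⟨b, hb⟩ : Fin N) then q.2.parts.count ((k:ℕ)+1) else 0) := by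
        intro k
        apply if_congr _ rfl rfl
        constructor
        · intro h'
          apply Fin.ext
          simp only [Fin.val_mk]
          omega
        · intro h'
          subst h'
          simp
      rw [Finset.sum_congr rfl (fun k _ => h1 k), Finset.sum_ite_eq' Finset.univ]
      simp
    · have h1 : ∀ k : Fin N, (if (k:ℕ)+1 = b+1 then q.2.parts.count ((k:ℕ)+1) else 0) = 0 := by
        intro k
        rw [if_neg]
        have := k.isLt
        omega
      rw [Finset.sum_congr rfl (fun k _ => h1 k), Finset.sum_const_zero]
      symm
      rw [Multiset.count_eq_zero]
      intro hmem
      exact absurd (h _ hmem) (by omega)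

lemma multL_bound (N : ℕ) (v : Fin N → ℕ) : ∀ x ∈ (multL N v).2.parts, x ≤ N := by
  intro x hx
  rw [multL_parts] at hx
  unfold multParts at hx
  rw [Multiset.mem_sum] at hx
  obtain ⟨k, _, hk⟩ := hx
  rw [Multiset.eq_of_mem_replicate hk]
  have := k.isLt
  omega

end Mult

section Bounds

open Filter Topology

lemma geom_partial {r : ℝ} (hr0 : 0 ≤ r) (hr : r < 1) (s : Finset ℕ) :
    ∑ k ∈ s, r ^ (k+1) ≤ r * (1-r)⁻¹ := by
  have hgs : Summable (fun k : ℕ => r ^ k) := summable_geometric_of_lt_one hr0 hr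
  have h1 : ∑ k ∈ s, r ^ (k+1) = r * ∑ k ∈ s, r ^ k := by
    rw [Finset.mul_sum]
    exact Finset.sum_congr rfl (fun k _ => by rw [pow_succ]; ring)
  rw [h1]
  apply mul_le_mul_of_nonneg_left _ hr0
  calc ∑ k ∈ s, r ^ k ≤ ∑' k : ℕ, r ^ k := Summable.sum_le_tsum s (fun k _ => pow_nonneg hr0 _) hgs
    _ = (1-r)⁻¹ := tsum_geometric_of_lt_one hr0 hr

lemma factor_le {r x : ℝ} (hr : r < 1) (hx0 : 0 ≤ x) (hxr : x ≤ r) :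
    (1 - x)⁻¹ ≤ Real.exp (x * (1-r)⁻¹) := by
  have hx1 : x < 1 := lt_of_le_of_lt hxr hr
  have h1 : 0 < 1 - x := by linarith
  have h2 : 0 < 1 - r := by linarith
  have key1 : (1-x)⁻¹ = 1 + x / (1-x) := by field_simp; ring
  have key2 : x / (1-x) ≤ x / (1-r) := div_le_div_of_nonneg_left hx0 h2 (by linarith)
  have key3 : x / (1-r) + 1 ≤ Real.exp (x / (1-r)) := Real.add_one_le_exp _
  have : x / (1-r) = x * (1-r)⁻¹ := div_eq_mul_inv _ _
  rw [← this]
  linarith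

lemma prod_inv_le {r : ℝ} (hr0 : 0 ≤ r) (hr : r < 1) (M : ℕ) :
    ∏ k : Fin M, (1 - r ^ ((k:ℕ)+1))⁻¹ ≤ Real.exp (r * (1-r)⁻¹ * (1-r)⁻¹) := by
  have hlt : ∀ k : ℕ, r ^ (k+1) ≤ r := fun k => pow_le_of_le_one hr0 (le_of_lt hr) (by omega)
  have h1 : ∏ k : Fin M, (1 - r^((k:ℕ)+1))⁻¹
      ≤ ∏ k : Fin M, Real.exp (r^((k:ℕ)+1) * (1-r)⁻¹) := by
    apply Finset.prod_le_prod
    · intro k _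
      have hlt1 : r ^ ((k:ℕ)+1) < 1 := lt_of_le_of_lt (hlt _) hr
      exact inv_nonneg.mpr (by linarith)
    · intro k _
      exact factor_le hr (pow_nonneg hr0 _) (hlt _)
  have h2 : ∏ k : Fin M, Real.exp (r^((k:ℕ)+1) * (1-r)⁻¹)
      = Real.exp (∑ k : Fin M, r^((k:ℕ)+1) * (1-r)⁻¹) := (Real.exp_sum _ _).symm
  have h3 : (∑ k : Fin M, r^((k:ℕ)+1) * (1-r)⁻¹) ≤ r * (1-r)⁻¹ * (1-r)⁻¹ := by
    rw [← Finset.sum_mul]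
    apply mul_le_mul_of_nonneg_right _ (inv_nonneg.mpr (by linarith))
    rw [Fin.sum_univ_eq_sum_range (fun k => r ^ (k+1)) M]
    exact geom_partial hr0 hr _
  calc ∏ k : Fin M, (1 - r^((k:ℕ)+1))⁻¹ ≤ _ := h1
    _ = _ := h2
    _ ≤ Real.exp (r * (1-r)⁻¹ * (1-r)⁻¹) := Real.exp_le_exp.mpr h3

lemma prod_one_add_le {r : ℝ} (hr0 : 0 ≤ r) (hr : r < 1) (N : ℕ) :
    ∏ k ∈ Finset.range N, (1 + r ^ (k+1)) ≤ Real.exp (r * (1-r)⁻¹) := by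
  have h1 : ∏ k ∈ Finset.range N, (1 + r^(k+1)) ≤ ∏ k ∈ Finset.range N, Real.exp (r^(k+1)) := by
    apply Finset.prod_le_prod
    · intro k _; positivity
    · intro k _
      have := Real.add_one_le_exp (r^(k+1))
      linarith
  have h2 : ∏ k ∈ Finset.range N, Real.exp (r^(k+1))
      = Real.exp (∑ k ∈ Finset.range N, r^(k+1)) := (Real.exp_sum _ _).symm
  calc ∏ k ∈ Finset.range N, (1 + r^(k+1)) ≤ _ := h1
    _ = _ := h2
    _ ≤ Real.exp (r * (1-r)⁻¹) := Real.exp_le_exp.mpr (geom_partial hr0 hr _)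

lemma lam_summable {r : ℝ} (hr0 : 0 ≤ r) (hr : r < 1) :
    Summable (fun q : Lam => r ^ q.1) := by
  classical
  apply summable_of_sum_le (fun q => pow_nonneg hr0 _)
  intro u
  set M := 1 + u.sup (fun q : Lam => q.1) with hM
  have hbound : ∀ q ∈ u, ∀ x ∈ q.2.parts, x ≤ M := by
    intro q hq x hx
    have h1 : x ≤ q.2.parts.sum :=
      Multiset.single_le_sum (fun y _ => Nat.zero_le y) x hx
    rw [q.2.parts_sum] at h1
    have h2 : q.1 ≤ u.sup (fun q : Lam => q.1) := Finset.le_sup hq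
    omega
  set ι : Lam → (Fin M → ℕ) := fun q k => q.2.parts.count ((k:ℕ)+1) with hι
  have hrec : ∀ q ∈ u, multL M (ι q) = q :=
    fun q hq => multL_recover M q (hbound q hq)
  have hwt : ∀ q ∈ u, q.1 = ∑ k : Fin M, ((k:ℕ)+1) * ι q k := by
    intro q hq
    conv_lhs => rw [← hrec q hq]
    rw [multL_fst]
  set F : (Fin M → ℕ) → ℝ := fun v => ∏ k : Fin M, (r ^ ((k:ℕ)+1)) ^ (v k) with hF
  have hfs : ∀ k : Fin M, Summable fun x : ℕ => ‖(r ^ ((k:ℕ)+1)) ^ x‖ := by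
    intro k
    apply Summable.congr (summable_geometric_of_lt_one (pow_nonneg hr0 ((k:ℕ)+1))
      (pow_lt_one₀ hr0 hr (by omega)))
    intro x
    rw [norm_pow, Real.norm_eq_abs, abs_of_nonneg (pow_nonneg hr0 _)]
  obtain ⟨hFs, hFt⟩ := tsum_pi_fam M (fun (k : Fin M) (x : ℕ) => (r ^ ((k:ℕ)+1)) ^ x) hfs
  have hFsum : Summable F := hFs.of_norm
  have hFnonneg : ∀ v, 0 ≤ F v :=
    fun v => Finset.prod_nonneg (fun k _ => pow_nonneg (pow_nonneg hr0 _) _)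
  have hinj : ∀ q ∈ u, ∀ q' ∈ u, ι q = ι q' → q = q' := by
    intro q hq q' hq' h
    rw [← hrec q hq, ← hrec q' hq', h]
  have step1 : ∑ q ∈ u, r ^ q.1 = ∑ v ∈ u.image ι, F v := by
    rw [Finset.sum_image hinj]
    apply Finset.sum_congr rfl
    intro q hq
    rw [hwt q hq, hF]
    rw [← Finset.prod_pow_eq_pow_sum]
    exact Finset.prod_congr rfl (fun k _ => by rw [pow_mul])
  rw [step1]
  calc ∑ v ∈ u.image ι, F v ≤ ∑' v, F v :=
      Summable.sum_le_tsum _ (fun v _ => hFnonneg v) hFsum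
    _ = ∏ k : Fin M, ∑' x : ℕ, (r ^ ((k:ℕ)+1))^x := hFt
    _ = ∏ k : Fin M, (1 - r ^ ((k:ℕ)+1))⁻¹ := by
        apply Finset.prod_congr rfl
        intro k _
        rw [tsum_geometric_of_lt_one (pow_nonneg hr0 _) (pow_lt_one₀ hr0 hr (by omega))]
    _ ≤ Real.exp (r * (1-r)⁻¹ * (1-r)⁻¹) := prod_inv_le hr0 hr M

end Bounds

section Euler

open Filter Topology

lemma count_multL (N : ℕ) (v : Fin N → ℕ) (k : Fin N) :
    (multL N v).2.parts.count ((k:ℕ)+1) = v k := by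
  rw [multL_parts, count_multParts]
  have h1 : ∀ j : Fin N, (if (j:ℕ)+1 = (k:ℕ)+1 then v j else 0)
      = (if j = k then v j else 0) := by
    intro j
    apply if_congr _ rfl rfl
    constructor
    · intro h'; exact Fin.ext (by omega)
    · intro h'; rw [h']
  rw [Finset.sum_congr rfl (fun j _ => h1 j), Finset.sum_ite_eq' Finset.univ]
  simp

def multEquiv (N : ℕ) : (Fin N → ℕ) ≃ {q : Lam // ∀ x ∈ q.2.parts, x ≤ N} where
  toFun v := ⟨multL N v, multL_bound N v⟩
  invFun q := fun k => q.1.2.parts.count ((k:ℕ)+1)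
  left_inv v := by
    funext k
    exact count_multL N v k
  right_inv q := Subtype.ext (multL_recover N q.1 q.2)

lemma lam_tsum_fiber {𝕜 : Type*} [NormedField 𝕜] [CompleteSpace 𝕜] (h : ℕ → 𝕜)
    (hs : Summable (fun q : Lam => ‖h q.1‖)) :
    ∑' q : Lam, h q.1 = ∑' n : ℕ, (Fintype.card (Nat.Partition n) : 𝕜) * h n := by
  rw [Summable.tsum_sigma hs.of_norm]
  apply tsum_congr
  intro n
  rw [tsum_fintype]
  show (∑ _b : Nat.Partition n, h n) = _
  rw [Finset.sum_const, Finset.card_univ, nsmul_eq_mul]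

lemma partition_summable {r : ℝ} (hr0 : 0 ≤ r) (hr : r < 1) :
    Summable (fun n : ℕ => (Fintype.card (Nat.Partition n) : ℝ) * r ^ n) := by
  have hlam := lam_summable hr0 hr
  have h1 := (summable_sigma_of_nonneg (f := fun q : Lam => r ^ q.1)
    (fun q => pow_nonneg hr0 _)).mp hlam
  apply Summable.congr h1.2
  intro n
  rw [tsum_fintype]
  show (∑ _b : Nat.Partition n, r ^ n) = _
  rw [Finset.sum_const, Finset.card_univ, nsmul_eq_mul]

lemma one_sub_ne {z : ℂ} (hz : ‖z‖ < 1) (k : ℕ) : (1 : ℂ) - z^(k+1) ≠ 0 := by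
  intro h
  have h1 : z^(k+1) = 1 := (sub_eq_zero.mp h).symm
  have h2 : ‖z^(k+1)‖ < 1 := by
    rw [norm_pow]
    exact pow_lt_one₀ (norm_nonneg z) hz (by omega)
  rw [h1] at h2
  simp at h2

lemma multipliable_euler {z : ℂ} (hz : ‖z‖ < 1) :
    Multipliable (fun k : ℕ => (1:ℂ) - z^(k+1)) := by
  have hlog : Summable (fun k : ℕ => Complex.log (1 - z^(k+1))) := by
    obtain ⟨K, hK⟩ : ∃ K : ℕ, ‖z‖ ^ (K+1) ≤ 1/2 := by
      obtain ⟨n, hn⟩ := exists_pow_lt_of_lt_one (by norm_num : (0:ℝ) < 1/2) hz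
      exact ⟨n, le_trans (pow_le_pow_of_le_one (norm_nonneg z) hz.le (by omega)) hn.le⟩
    apply (summable_nat_add_iff K).mp
    apply Summable.of_norm_bounded
      (g := fun n : ℕ => (3/2 * ‖z‖^(K+1)) * ‖z‖^n)
      (((summable_geometric_of_lt_one (norm_nonneg z) hz)).mul_left _)
    intro n
    have hm : ‖-(z^((n+K)+1))‖ ≤ 1/2 := by
      rw [norm_neg, norm_pow]
      calc ‖z‖^(n+K+1) ≤ ‖z‖^(K+1) := pow_le_pow_of_le_one (norm_nonneg z) hz.le (by omega)
        _ ≤ 1/2 := hK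
    have h1 : (1:ℂ) - z^((n+K)+1) = 1 + (-(z^((n+K)+1))) := by ring
    rw [h1]
    calc ‖Complex.log (1 + (-(z^((n+K)+1))))‖ ≤ 3/2 * ‖-(z^((n+K)+1))‖ :=
        Complex.norm_log_one_add_half_le_self hm
      _ = 3/2 * ‖z‖^(n+K+1) := by rw [norm_neg, norm_pow]
      _ ≤ 3/2 * ‖z‖^(K+1) * ‖z‖^n := by
          rw [show n+K+1 = (K+1) + n by omega, pow_add]
          rw [mul_assoc]
      _ = (3/2 * ‖z‖^(K+1)) * ‖z‖^n := rfl
  exact Complex.multipliable_of_summable_log hlog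

lemma FN_val {z : ℂ} (hz : ‖z‖ < 1) (N : ℕ) :
    (∑' x : {q : Lam // ∀ y ∈ q.2.parts, y ≤ N}, z ^ (x.1.1))
      = ∏ k : Fin N, (1 - z^((k:ℕ)+1))⁻¹ := by
  have hfs : ∀ k : Fin N, Summable fun x : ℕ => ‖(z ^ ((k:ℕ)+1)) ^ x‖ := by
    intro k
    have heq : (fun x : ℕ => ‖(z ^ ((k:ℕ)+1)) ^ x‖) = fun x => (‖z‖^((k:ℕ)+1))^x := by
      funext x
      rw [norm_pow, norm_pow]
    rw [heq]
    exact summable_geometric_of_lt_one (pow_nonneg (norm_nonneg z) _)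
      (pow_lt_one₀ (norm_nonneg z) hz (by omega))
  obtain ⟨hFs, hFt⟩ := tsum_pi_fam N (fun (k : Fin N) (x : ℕ) => (z ^ ((k:ℕ)+1)) ^ x) hfs
  rw [← Equiv.tsum_eq (multEquiv N) (fun x : {q : Lam // ∀ y ∈ q.2.parts, y ≤ N} => z ^ (x.1.1))]
  have h1 : ∀ v : Fin N → ℕ, z ^ (((multEquiv N) v).1.1) = ∏ k : Fin N, (z ^ ((k:ℕ)+1)) ^ (v k) := by
    intro v
    show z ^ ((multL N v).1) = _
    rw [multL_fst, ← Finset.prod_pow_eq_pow_sum]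
    exact Finset.prod_congr rfl (fun k _ => by rw [pow_mul])
  rw [tsum_congr h1, hFt]
  apply Finset.prod_congr rfl
  intro k _
  rw [tsum_geometric_of_norm_lt_one
    (by rw [norm_pow]; exact pow_lt_one₀ (norm_nonneg z) hz (by omega))]

lemma euler {z : ℂ} (hz : ‖z‖ < 1) :
    (∏' k : ℕ, ((1:ℂ) - z^(k+1))) * (∑' q : Lam, z ^ q.1) = 1 := by
  classical
  have hr0 : 0 ≤ ‖z‖ := norm_nonneg z
  have hlam : Summable (fun q : Lam => ‖z‖ ^ q.1) := lam_summable hr0 hz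
  have hnorm : Summable (fun q : Lam => ‖(z : ℂ) ^ q.1‖) := by
    apply Summable.congr hlam
    intro q
    rw [norm_pow]
  have hF : Summable (fun q : Lam => z ^ q.1) := hnorm.of_norm
  set F := ∑' q : Lam, z ^ q.1 with hFdef
  set P := ∏' k : ℕ, ((1:ℂ) - z^(k+1)) with hPdef
  have hPlim : Tendsto (fun N => ∏ k ∈ Finset.range N, ((1:ℂ) - z^(k+1))) atTop (𝓝 P) :=
    (multipliable_euler hz).hasProd.tendsto_prod_nat
  have hPbound : ∀ N, ‖∏ k ∈ Finset.range N, ((1:ℂ) - z^(k+1))‖ ≤ Real.exp (‖z‖ * (1-‖z‖)⁻¹) := by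
    intro N
    calc ‖∏ k ∈ Finset.range N, ((1:ℂ) - z^(k+1))‖
        = ∏ k ∈ Finset.range N, ‖(1:ℂ) - z^(k+1)‖ := norm_prod _ _
      _ ≤ ∏ k ∈ Finset.range N, (1 + ‖z‖^(k+1)) := by
          apply Finset.prod_le_prod (fun k _ => norm_nonneg _)
          intro k _
          calc ‖(1:ℂ) - z^(k+1)‖ ≤ ‖(1:ℂ)‖ + ‖z^(k+1)‖ := norm_sub_le _ _
            _ = 1 + ‖z‖^(k+1) := by rw [norm_one, norm_pow]
      _ ≤ Real.exp (‖z‖ * (1-‖z‖)⁻¹) := prod_one_add_le hr0 hz N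
  set g : ℕ → ℝ := fun n => (Fintype.card (Nat.Partition n) : ℝ) * ‖z‖ ^ n with hg
  have hgs : Summable g := partition_summable hr0 hz
  set sN : ℕ → Set Lam := fun N => {q : Lam | ∀ y ∈ q.2.parts, y ≤ N} with hsN
  have hsplit : ∀ N, (∑' x : (sN N), z ^ (x.1.1)) + (∑' x : ↑(sN N)ᶜ, z ^ (x.1.1)) = F :=
    fun N => Summable.tsum_subtype_add_tsum_subtype_compl hF (sN N)
  have hPNFN : ∀ N, (∏ k ∈ Finset.range N, ((1:ℂ) - z^(k+1)))
      * (∑' x : (sN N), z ^ (x.1.1)) = 1 := by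
    intro N
    rw [show (∑' x : (sN N), z ^ (x.1.1)) = ∏ k : Fin N, (1 - z^((k:ℕ)+1))⁻¹ from FN_val hz N]
    rw [← Fin.prod_univ_eq_prod_range (fun k => 1 - z^(k+1)) N]
    rw [← Finset.prod_mul_distrib]
    rw [Finset.prod_congr rfl (fun (k : Fin N) _ => mul_inv_cancel₀ (one_sub_ne hz (k:ℕ)))]
    exact Finset.prod_const_one
  -- tail estimate
  have htail : ∀ N : ℕ, ‖∑' x : ↑(sN N)ᶜ, z ^ (x.1.1)‖ ≤ ∑' k : ℕ, g (k + (N+1)) := by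
    intro N
    set hN : ℕ → ℝ := fun n => if N < n then ‖z‖^n else 0 with hhN
    have hNnn : ∀ n, 0 ≤ hN n := by
      intro n
      rw [hhN]
      dsimp only
      split
      · exact pow_nonneg hr0 _
      · exact le_refl 0
    have hNle : ∀ n, hN n ≤ ‖z‖^n := by
      intro n
      rw [hhN]
      dsimp only
      split
      · exact le_refl _
      · exact pow_nonneg hr0 _
    have hNsum : Summable (fun q : Lam => hN q.1) :=
      Summable.of_nonneg_of_le (fun q => hNnn _) (fun q => hNle _) hlam
    have step1 : ‖∑' x : ↑(sN N)ᶜ, z ^ (x.1.1)‖ ≤ ∑' x : ↑(sN N)ᶜ, ‖z ^ (x.1.1)‖ :=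
      norm_tsum_le_tsum_norm (hnorm.subtype _)
    have step2 : (∑' x : ↑(sN N)ᶜ, ‖z ^ (x.1.1)‖) ≤ ∑' q : Lam, hN q.1 := by
      rw [tsum_subtype ((sN N)ᶜ) (fun q : Lam => ‖z ^ q.1‖)]
      apply Summable.tsum_le_tsum _ (hnorm.indicator _) hNsum
      intro q
      by_cases hq : q ∈ (sN N)ᶜ
      · rw [Set.indicator_of_mem hq]
        have hq1 : N < q.1 := by
          simp only [hsN, Set.mem_compl_iff, Set.mem_setOf_eq, not_forall] at hq
          obtain ⟨y, hy, hyN⟩ := hq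
          have h2 : y ≤ q.2.parts.sum := Multiset.single_le_sum (fun a _ => Nat.zero_le a) y hy
          rw [q.2.parts_sum] at h2
          omega
        rw [norm_pow, hhN]
        dsimp only
        rw [if_pos hq1]
      · rw [Set.indicator_of_notMem hq]
        exact hNnn _
    have hNnorm : Summable (fun q : Lam => ‖hN q.1‖) := by
      apply Summable.congr hNsum
      intro q
      rw [Real.norm_eq_abs, abs_of_nonneg (hNnn _)]
    have step3 : (∑' q : Lam, hN q.1) = ∑' k : ℕ, g (k + (N+1)) := by
      rw [lam_tsum_fiber hN hNnorm]
      have hfib : ∀ n, (Fintype.card (Nat.Partition n) : ℝ) * hN n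
          = (if N < n then g n else 0) := by
        intro n
        rw [hhN, hg]
        dsimp only
        split
        · rfl
        · rw [mul_zero]
      rw [tsum_congr hfib]
      have hsupp : Function.support (fun n : ℕ => if N < n then g n else 0)
          ⊆ Set.range (fun k : ℕ => k + (N+1)) := by
        intro x hx
        have hNx : N < x := by
          by_contra hc
          exact hx (if_neg hc)
        refine ⟨x - (N+1), ?_⟩
        simp only []
        omega
      have hre : (∑' k : ℕ, (fun n : ℕ => if N < n then g n else 0) (k + (N+1)))
          = ∑' n : ℕ, (fun n : ℕ => if N < n then g n else 0) n :=
        Function.Injective.tsum_eq (add_left_injective (N+1)) hsupp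
      simp only [] at hre
      rw [← hre]
      apply tsum_congr
      intro k
      rw [if_pos (by omega)]
    calc ‖∑' x : ↑(sN N)ᶜ, z ^ (x.1.1)‖ ≤ ∑' x : ↑(sN N)ᶜ, ‖z ^ (x.1.1)‖ := step1
      _ ≤ ∑' q : Lam, hN q.1 := step2
      _ = ∑' k : ℕ, g (k + (N+1)) := step3
  -- limits
  have hTT : Tendsto (fun N : ℕ => ∑' k : ℕ, g (k + (N+1))) atTop (𝓝 0) :=
    (tendsto_sum_nat_add g).comp (tendsto_add_atTop_nat 1)
  have hRN : Tendsto (fun N => (∏ k ∈ Finset.range N, ((1:ℂ) - z^(k+1)))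
      * (∑' x : ↑(sN N)ᶜ, z ^ (x.1.1))) atTop (𝓝 0) := by
    rw [tendsto_zero_iff_norm_tendsto_zero]
    apply squeeze_zero (fun N => norm_nonneg _)
      (g := fun N => Real.exp (‖z‖ * (1-‖z‖)⁻¹) * (∑' k : ℕ, g (k + (N+1))))
    · intro N
      rw [norm_mul]
      have h1 := hPbound N
      have h2 := htail N
      have h3 : (0:ℝ) ≤ ∑' k : ℕ, g (k + (N+1)) := le_trans (norm_nonneg _) (htail N)
      have h4 : (0:ℝ) ≤ ‖∏ k ∈ Finset.range N, ((1:ℂ) - z^(k+1))‖ := norm_nonneg _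
      calc ‖∏ k ∈ Finset.range N, ((1:ℂ) - z^(k+1))‖ * ‖∑' x : ↑(sN N)ᶜ, z ^ (x.1.1)‖
          ≤ ‖∏ k ∈ Finset.range N, ((1:ℂ) - z^(k+1))‖ * (∑' k : ℕ, g (k + (N+1))) :=
            mul_le_mul_of_nonneg_left h2 h4
        _ ≤ Real.exp (‖z‖ * (1-‖z‖)⁻¹) * (∑' k : ℕ, g (k + (N+1))) :=
            mul_le_mul_of_nonneg_right h1 h3
    · have := hTT.const_mul (Real.exp (‖z‖ * (1-‖z‖)⁻¹))
      simpa using this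
  have hPF : Tendsto (fun N => (∏ k ∈ Finset.range N, ((1:ℂ) - z^(k+1))) * F) atTop
      (𝓝 (P * F)) := hPlim.mul_const F
  have hPF1 : Tendsto (fun N => (∏ k ∈ Finset.range N, ((1:ℂ) - z^(k+1))) * F) atTop (𝓝 1) := by
    have heq : ∀ N, (∏ k ∈ Finset.range N, ((1:ℂ) - z^(k+1))) * F
        = 1 + (∏ k ∈ Finset.range N, ((1:ℂ) - z^(k+1))) * (∑' x : ↑(sN N)ᶜ, z ^ (x.1.1)) := by
      intro N
      rw [← hsplit N, mul_add, hPNFN N]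
    apply Tendsto.congr (fun N => (heq N).symm)
    have := hRN.const_add (1:ℂ)
    simpa using this
  exact tendsto_nhds_unique hPF hPF1

end Euler

section Main

def q0 : Lam := ⟨0, ⟨0, fun h => absurd h (Multiset.notMem_zero _), rfl⟩⟩

lemma q0_fst : q0.1 = 0 := rfl

/-- the lattice subtype of the theorem -/
abbrev Lat (t l : ℕ) :=
  {m : Fin t → ℤ // (∑ i, m i) = 0 ∧ (∑ i : Fin t, ((i : ℕ) : ℤ) * m i) % t = (l : ℤ)}

lemma Qz_mod {t : ℕ} (c : Fin t → ℤ) (k : ℤ) :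
    (Qz t c + t * k) % t = (∑ i : Fin t, ((i : ℕ) : ℤ) * c i) % t := by
  unfold Qz
  have h1 : (t:ℤ) * ((∑ i, c i ^ 2) / 2) + (∑ i : Fin t, ((i : ℕ) : ℤ) * c i) + t * k
      = (∑ i : Fin t, ((i : ℕ) : ℤ) * c i) + (t:ℤ) * (((∑ i, c i ^ 2) / 2) + k) := by ring
  rw [h1, Int.add_mul_emod_self_left]

def thetaEquiv {t : ℕ} (ht : 1 ≤ t) (l : ℕ) :
    {q : Lam // q.1 % t = l} ≃ (Lat t l) × (Fin t → Lam) where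
  toFun x := ⟨⟨phi1 t x.1, (phi_spec ht x.1).1, by
      have hw := (phi_spec ht x.1).2.1
      have h2 : ((x.1.1 : ℤ)) % t = (l : ℤ) := by
        have := x.2
        omega
      have h3 : ((x.1.1 : ℤ)) % t
          = (∑ i : Fin t, ((i : ℕ) : ℤ) * phi1 t x.1 i) % t := by
        rw [hw, Qz_mod]
      rw [← h3, h2]⟩, phi2 t x.1⟩
  invFun w := ⟨psiF t w.1.1 w.2, by
      have hw := (psi_spec ht w.1.1 w.2 w.1.2.1).1
      have h3 : (((psiF t w.1.1 w.2).1 : ℤ)) % t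
          = (∑ i : Fin t, ((i : ℕ) : ℤ) * w.1.1 i) % t := by
        rw [hw, Qz_mod]
      rw [w.1.2.2] at h3
      omega⟩
  left_inv x := Subtype.ext (phi_spec ht x.1).2.2
  right_inv w := by
    obtain ⟨hfst, hsnd⟩ := (psi_spec ht w.1.1 w.2 w.1.2.1).2
    refine Prod.ext (Subtype.ext ?_) ?_
    · exact hfst
    · exact hsnd

lemma psiF_weight {t : ℕ} (ht : 1 ≤ t) (c : Fin t → ℤ) (μ : Fin t → Lam) (hc0 : (∑ r, c r) = 0) :
    (psiF t c μ).1 = (Qz t c).toNat + t * ∑ r, (μ r).1 := by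
  have h1 := (psi_spec ht c μ hc0).1
  have hQ0 : 0 ≤ Qz t c := Qz_nonneg ht c hc0
  have h2 : ((psiF t c μ).1 : ℤ)
      = (((Qz t c).toNat : ℤ)) + (t : ℤ) * ((∑ r, (μ r).1 : ℕ) : ℤ) := by
    rw [h1, Int.toNat_of_nonneg hQ0, Nat.cast_sum]
  exact_mod_cast h2

end Main

end ThetaAux

open scoped BigOperators

/-- For `|z| < 1`, `t ≥ 1`, `0 ≤ ℓ < t`, and a fixed `t`-th root `y` of `z`
(so that `z^{m/t} = y^m`), the theta function
`Θ_{ℓ,t}(z) = ∑_{m ∈ ℤ^t, 1·m = 0, b·m ≡ ℓ (t)} z^{‖m‖²/2 + b·m/t}` with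
`b = (0,1,…,t-1)` satisfies
`Θ_{ℓ,t}(z) = (z;z)_∞^t · ∑_{m ≥ 0, m ≡ ℓ (t)} p(m) z^{m/t}`. -/
theorem theta_lattice_eq_partition_sum (t : ℕ) (ht : 1 ≤ t) (l : ℕ) (hl : l < t)
    (z y : ℂ) (hz : ‖z‖ < 1) (hy0 : y ≠ 0) (hy : y ^ t = z) :
    (∑' m : {m : Fin t → ℤ // (∑ i, m i) = 0 ∧ (∑ i : Fin t, ((i : ℕ) : ℤ) * m i) % t = (l : ℤ)},
        y ^ ((t : ℤ) * ((∑ i, (m.1 i) ^ 2) / 2) + ∑ i : Fin t, ((i : ℕ) : ℤ) * m.1 i)) =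
      (∏' k : ℕ, (1 - z ^ (k + 1))) ^ t *
        ∑' m : ℕ, (if m % t = l then (Fintype.card (Nat.Partition m) : ℂ) else 0) * y ^ m := by
  classical
  open ThetaAux in
  have hy1 : ‖y‖ < 1 := by
    by_contra hc
    push_neg at hc
    have h1 : (1:ℝ) ≤ ‖y‖ ^ t := one_le_pow₀ hc
    rw [← norm_pow, hy] at h1
    linarith
  have hy1' : (0:ℝ) ≤ ‖y‖ := norm_nonneg y
  -- summability on Lam
  have hlamy : Summable (fun q : ThetaAux.Lam => ‖y‖ ^ q.1) := ThetaAux.lam_summable hy1' hy1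
  have hnormy : Summable (fun q : ThetaAux.Lam => ‖y ^ q.1‖) := by
    apply Summable.congr hlamy
    intro q
    rw [norm_pow]
  have hnormz : Summable (fun q : ThetaAux.Lam => ‖z ^ q.1‖) := by
    apply Summable.congr (ThetaAux.lam_summable (norm_nonneg z) hz)
    intro q
    rw [norm_pow]
  set F := ∑' q : ThetaAux.Lam, z ^ q.1 with hF
  set P := ∏' k : ℕ, ((1:ℂ) - z ^ (k + 1)) with hP
  set Θ := ∑' m : ThetaAux.Lat t l, y ^ ((ThetaAux.Qz t m.1).toNat) with hΘ
  -- Step 1: LHS = Θ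
  have step1 : (∑' m : ThetaAux.Lat t l,
      y ^ ((t : ℤ) * ((∑ i, (m.1 i) ^ 2) / 2) + ∑ i : Fin t, ((i : ℕ) : ℤ) * m.1 i)) = Θ := by
    rw [hΘ]
    apply tsum_congr
    intro m
    have hQ0 : 0 ≤ ThetaAux.Qz t m.1 := ThetaAux.Qz_nonneg ht m.1 m.2.1
    have hQ0' : (0:ℤ) ≤ (t : ℤ) * ((∑ i, (m.1 i) ^ 2) / 2)
        + ∑ i : Fin t, ((i : ℕ) : ℤ) * m.1 i := hQ0
    rw [← Int.toNat_of_nonneg hQ0', zpow_natCast]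
    rfl
  -- Step 2: RHS sum = tsum over X
  set X := {q : ThetaAux.Lam // q.1 % t = l} with hX
  have step2 : (∑' m : ℕ, (if m % t = l then (Fintype.card (Nat.Partition m) : ℂ) else 0) * y ^ m)
      = ∑' q : X, y ^ (q.1.1) := by
    have h1 : (∑' q : X, y ^ (q.1.1))
        = ∑' q : ThetaAux.Lam, Set.indicator {q : ThetaAux.Lam | q.1 % t = l}
            (fun q : ThetaAux.Lam => y ^ q.1) q :=
      tsum_subtype {q : ThetaAux.Lam | q.1 % t = l} (fun q : ThetaAux.Lam => y ^ q.1)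
    set hh : ℕ → ℂ := fun n => if n % t = l then y ^ n else 0 with hhdef
    have h2 : ∀ q : ThetaAux.Lam, Set.indicator {q : ThetaAux.Lam | q.1 % t = l}
        (fun q : ThetaAux.Lam => y ^ q.1) q = hh q.1 := by
      intro q
      rw [Set.indicator_apply, hhdef]
      simp only [Set.mem_setOf_eq]
    have hhsum : Summable (fun q : ThetaAux.Lam => ‖hh q.1‖) := by
      apply Summable.of_nonneg_of_le (fun q => norm_nonneg _) _ hlamy
      intro q
      rw [hhdef]
      dsimp only
      split
      · rw [norm_pow]
      · simp [pow_nonneg hy1']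
    have h3 : (∑' q : ThetaAux.Lam, hh q.1)
        = ∑' n : ℕ, (Fintype.card (Nat.Partition n) : ℂ) * hh n :=
      ThetaAux.lam_tsum_fiber hh hhsum
    rw [h1, tsum_congr h2, h3]
    apply tsum_congr
    intro n
    rw [hhdef]
    dsimp only
    split
    · rfl
    · rw [mul_zero, zero_mul]
  -- Step 3: tsum over X = Θ * F^t
  set e := ThetaAux.thetaEquiv (t := t) ht l with he
  have hXsum : Summable (fun q : X => ‖y ^ (q.1.1)‖) := hnormy.subtype _
  have hYsum : Summable (fun w : (ThetaAux.Lat t l) × (Fin t → ThetaAux.Lam) =>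
      ‖y ^ ((ThetaAux.psiF t w.1.1 w.2).1)‖) := by
    have := (Equiv.summable_iff e.symm
      (f := fun q : X => ‖y ^ (q.1.1)‖)).mpr hXsum
    exact this
  have hwt : ∀ w : (ThetaAux.Lat t l) × (Fin t → ThetaAux.Lam),
      y ^ ((ThetaAux.psiF t w.1.1 w.2).1)
        = y ^ ((ThetaAux.Qz t w.1.1).toNat) * ∏ r, z ^ ((w.2 r).1) := by
    intro w
    rw [ThetaAux.psiF_weight ht w.1.1 w.2 w.1.2.1, pow_add, pow_mul, hy,
      Finset.prod_pow_eq_pow_sum]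
  obtain ⟨hPis, hPit⟩ := ThetaAux.tsum_pi_pow (fun q : ThetaAux.Lam => z ^ q.1) hnormz t
  have hq0inj : Function.Injective
      (fun c : ThetaAux.Lat t l => (c, fun _ : Fin t => ThetaAux.q0)) := by
    intro a b h
    exact congrArg Prod.fst h
  have hΘsum : Summable (fun c : ThetaAux.Lat t l => ‖y ^ ((ThetaAux.Qz t c.1).toNat)‖) := by
    have h1 := hYsum.comp_injective hq0inj
    apply Summable.congr h1
    intro c
    simp only [Function.comp_apply]
    congr 2
    rw [ThetaAux.psiF_weight ht c.1 _ c.2.1]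
    simp [ThetaAux.q0_fst]
  have step3 : (∑' q : X, y ^ (q.1.1)) = Θ * F ^ t := by
    rw [← Equiv.tsum_eq e.symm (fun q : X => y ^ (q.1.1))]
    have h1 : ∀ w : (ThetaAux.Lat t l) × (Fin t → ThetaAux.Lam),
        y ^ (((e.symm w) : X).1.1)
          = (fun c : ThetaAux.Lat t l => y ^ ((ThetaAux.Qz t c.1).toNat)) w.1
            * (fun μ : Fin t → ThetaAux.Lam => ∏ r, z ^ ((μ r).1)) w.2 := by
      intro w
      exact hwt w
    rw [tsum_congr h1]
    obtain ⟨_, hval⟩ := ThetaAux.tsum_mul_prod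
      (fun c : ThetaAux.Lat t l => y ^ ((ThetaAux.Qz t c.1).toNat))
      (fun μ : Fin t → ThetaAux.Lam => ∏ r, z ^ ((μ r).1)) hΘsum hPis
    rw [hval, hPit, hΘ, hF]
  -- Step 4: conclude using Euler
  have heuler : P * F = 1 := ThetaAux.euler hz
  rw [step1, step2, step3]
  calc Θ = 1 ^ t * Θ := by rw [one_pow, one_mul]
    _ = (P * F) ^ t * Θ := by rw [heuler]
    _ = P ^ t * (Θ * F ^ t) := by ring
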